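/- Under the same setup, if additionally ε(x) = x/λ(y(x)) is increasing on an interval [x_a, x_b] ⊆ [x^{BP}, 1], then with ε_a = ε(x_a), ε_b = ε(x_b), the area under the BP EXIT function satisfies ∫_{ε_a}^{ε_b} h^{BP}(ε) dε = (1/∫₀¹λ) · ( ε_b·∫₀^{y(x_b)} λ(u) du − ε_a·∫₀^{y(x_a)} λ(u) du − x_b·y(x_b) + x_a·y(x_a) + ∫_{x_a}^{x_b} y(x) dx ), where h^{BP}(ε(x)) = Λ(y(x)). -/

import Mathlib

open Polynomial MeasureTheory intervalIntegral Set

lemma polyEvalNonneg {p : Polynomial ℝ} (hc : ∀ k, 0 ≤ p.coeff k) {u : ℝ} (hu : 0 ≤ u) :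
    0 ≤ p.eval u := by
  rw [Polynomial.eval_eq_sum_range]
  exact Finset.sum_nonneg fun k _ => mul_nonneg (hc k) (pow_nonneg hu k)

lemma polyEvalPos {p : Polynomial ℝ} (hc : ∀ k, 0 ≤ p.coeff k) (hp : p ≠ 0) {u : ℝ}
    (hu : 0 < u) : 0 < p.eval u := by
  rw [Polynomial.eval_eq_sum_range]
  have h0 : 0 < p.coeff p.natDegree * u ^ p.natDegree :=
    mul_pos ((hc _).lt_of_ne (Ne.symm (Polynomial.leadingCoeff_ne_zero.mpr hp))) (pow_pos hu _)
  exact lt_of_lt_of_le h0 <| Finset.single_le_sum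
    (fun k _ => mul_nonneg (hc k) (pow_nonneg hu.le k)) (Finset.self_mem_range_succ _)

lemma polyDerivCoeffNonneg {p : Polynomial ℝ} (hc : ∀ k, 0 ≤ p.coeff k) (k : ℕ) :
    0 ≤ p.derivative.coeff k := by
  rw [Polynomial.coeff_derivative]
  have := hc (k + 1)
  positivity

lemma polyStrictMono {p : Polynomial ℝ} (hc : ∀ k, 0 ≤ p.coeff k) (hd : 1 ≤ p.natDegree) :
    StrictMonoOn (fun u => p.eval u) (Set.Ici (0:ℝ)) := by
  have hder : p.derivative ≠ 0 := fun h => by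
    have := Polynomial.natDegree_eq_zero_of_derivative_eq_zero h; omega
  refine strictMonoOn_of_deriv_pos (convex_Ici 0) p.continuous.continuousOn fun x hx => ?_
  rw [interior_Ici] at hx
  rw [Polynomial.deriv]
  exact polyEvalPos (polyDerivCoeffNonneg hc) hder hx


/-- Node-perspective degree distribution `Λ(u) = (∫₀ᵘ λ)/(∫₀¹ λ)`. -/
noncomputable def nodeDist (lam : Polynomial ℝ) (u : ℝ) : ℝ :=
  (∫ t in (0:ℝ)..u, lam.eval t) / (∫ t in (0:ℝ)..1, lam.eval t)

/-- `y(x) = 1 − ρ(1−x)`. -/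
noncomputable def Yfun (rho : Polynomial ℝ) (x : ℝ) : ℝ := 1 - rho.eval (1 - x)

/-- `ε(x) = x / λ(y(x))`. -/
noncomputable def epsFun (lam rho : Polynomial ℝ) (x : ℝ) : ℝ :=
  x / lam.eval (Yfun rho x)

/-- Second integration trick: if `ε(x)` is increasing on `[x_a,x_b] ⊆ (0,1]` and
`h^{BP}` is the BP EXIT function there (`h^{BP}(ε(x)) = Λ(y(x))`), then
`∫_{ε_a}^{ε_b} h^{BP}(ε) dε = (1/∫₀¹λ)·(ε_b ∫₀^{y(x_b)}λ − ε_a ∫₀^{y(x_a)}λ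
− x_b y(x_b) + x_a y(x_a) + ∫_{x_a}^{x_b} y)`. -/
theorem exit_integration_by_parts_two (lam rho : Polynomial ℝ)
    (hlc : ∀ k, 0 ≤ lam.coeff k) (hrc : ∀ k, 0 ≤ rho.coeff k)
    (hl1 : lam.eval 1 = 1) (hr1 : rho.eval 1 = 1) (hl0 : lam.coeff 0 = 0)
    (hld : 1 ≤ lam.natDegree) (hrd : 1 ≤ rho.natDegree)
    (xa xb : ℝ) (hxa : 0 < xa) (hab : xa ≤ xb) (hxb : xb ≤ 1)
    (hmono : MonotoneOn (epsFun lam rho) (Set.Icc xa xb))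
    (hBP : ℝ → ℝ)
    (hBPdef : ∀ x ∈ Set.Icc xa xb, hBP (epsFun lam rho x) = nodeDist lam (Yfun rho x)) :
    (∫ e in (epsFun lam rho xa)..(epsFun lam rho xb), hBP e) =
      (1 / ∫ t in (0:ℝ)..1, lam.eval t) *
        (epsFun lam rho xb * (∫ u in (0:ℝ)..(Yfun rho xb), lam.eval u) -
          epsFun lam rho xa * (∫ u in (0:ℝ)..(Yfun rho xa), lam.eval u) -
          xb * Yfun rho xb + xa * Yfun rho xa + ∫ x in xa..xb, Yfun rho x) := by
  have hlam0 : lam ≠ 0 := fun h => by simp [h] at hld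
  have hrho0 : rho ≠ 0 := fun h => by simp [h] at hrd
  set I : ℝ := ∫ t in (0:ℝ)..1, lam.eval t with hI
  set F : ℝ → ℝ := fun u => ∫ t in (0:ℝ)..u, lam.eval t with hF
  set ε : ℝ → ℝ := epsFun lam rho with hε
  set Y : ℝ → ℝ := Yfun rho with hY
  -- basic positivity facts
  have hIpos : 0 < I :=
    intervalIntegral_pos_of_pos_on (lam.continuous.intervalIntegrable 0 1)
      (fun u hu => polyEvalPos hlc hlam0 hu.1) one_pos
  have hY1 : ∀ x ∈ Set.Icc xa xb, Y x ≤ 1 := by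
    intro x hx
    have : (0:ℝ) ≤ rho.eval (1 - x) :=
      polyEvalNonneg hrc (by linarith [hx.2])
    simp only [hY, Yfun]; linarith
  have hY0 : ∀ x ∈ Set.Icc xa xb, 0 < Y x := by
    intro x hx
    have hlt : rho.eval (1 - x) < rho.eval 1 := by
      have := polyStrictMono hrc hrd (show (1:ℝ) - x ∈ Set.Ici (0:ℝ) by
        simp; linarith [hx.2]) (show (1:ℝ) ∈ Set.Ici (0:ℝ) by simp)
        (by linarith [hxa.trans_le hx.1])
      simpa using this
    simp only [hY, Yfun]; rw [hr1] at hlt; linarith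
  have hLpos : ∀ x ∈ Set.Icc xa xb, 0 < lam.eval (Y x) := fun x hx =>
    polyEvalPos hlc hlam0 (hY0 x hx)
  -- derivatives
  have hYd : ∀ x : ℝ, HasDerivAt Y (rho.derivative.eval (1 - x)) x := by
    intro x
    have h1 : HasDerivAt (fun x : ℝ => 1 - x) (-1) x := by
      simpa using (hasDerivAt_id x).const_sub 1
    have h2 : HasDerivAt (fun x : ℝ => rho.eval (1 - x))
        (rho.derivative.eval (1 - x) * (-1)) x := (rho.hasDerivAt (1 - x)).comp x h1
    have := h2.const_sub 1
    simp only [mul_neg, mul_one, neg_neg] at this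
    exact this
  have hLYd : ∀ x : ℝ, HasDerivAt (fun x => lam.eval (Y x))
      (lam.derivative.eval (Y x) * rho.derivative.eval (1 - x)) x := fun x =>
    (lam.hasDerivAt (Y x)).comp x (hYd x)
  have hcontY : Continuous Y := by
    simp only [hY, Yfun]
    exact continuous_const.sub (rho.continuous.comp (continuous_const.sub continuous_id))
  have hcontLY : Continuous fun x => lam.eval (Y x) := lam.continuous.comp hcontY
  have hcontR' : Continuous fun x => rho.derivative.eval (1 - x) :=
    rho.derivative.continuous.comp (continuous_const.sub continuous_id)
  set E' : ℝ → ℝ := fun x =>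
    (lam.eval (Y x) - x * (lam.derivative.eval (Y x) * rho.derivative.eval (1 - x))) /
      lam.eval (Y x) ^ 2 with hE'
  have hεd : ∀ x, lam.eval (Y x) ≠ 0 → HasDerivAt ε (E' x) x := by
    intro x hne
    have := (hasDerivAt_id x).div (hLYd x) hne
    simp only [id, one_mul] at this
    exact this
  have hFd : ∀ u : ℝ, HasDerivAt F (lam.eval u) u := by
    intro u
    exact intervalIntegral.integral_hasDerivAt_right
      (lam.continuous.intervalIntegrable 0 u)
      (lam.continuous.stronglyMeasurableAtFilter _ _)
      lam.continuous.continuousAt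
  have hNd : ∀ x : ℝ, HasDerivAt (fun x => nodeDist lam (Y x))
      (lam.eval (Y x) * rho.derivative.eval (1 - x) / I) x := by
    intro x
    have := (((hFd (Y x)).comp x (hYd x)).div_const I)
    simpa [nodeDist, hF, hI] using this
  -- injectivity of ε on [xa, xb]
  have hFsm : StrictMonoOn F (Set.Ici (0:ℝ)) := by
    refine strictMonoOn_of_deriv_pos (convex_Ici 0)
      (fun u _ => ((hFd u).differentiableAt.continuousAt).continuousWithinAt) fun u hu => ?_
    rw [interior_Ici] at hu
    rw [(hFd u).deriv]
    exact polyEvalPos hlc hlam0 hu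
  have hInj : Set.InjOn ε (Set.Icc xa xb) := by
    intro x1 h1 x2 h2 he
    have e1 : nodeDist lam (Y x1) = nodeDist lam (Y x2) := by
      rw [← hBPdef x1 h1, ← hBPdef x2 h2, he]
    have e2 : F (Y x1) = F (Y x2) := by
      have := e1
      simp only [nodeDist, hF, hI] at this ⊢
      field_simp [hIpos.ne'] at this
      exact (div_left_inj' hIpos.ne').mp this
    have e3 : Y x1 = Y x2 :=
      hFsm.injOn (le_of_lt (hY0 x1 h1)) (le_of_lt (hY0 x2 h2)) e2
    have e4 : rho.eval (1 - x1) = rho.eval (1 - x2) := by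
      simp only [hY, Yfun] at e3; linarith
    have e5 : (1:ℝ) - x1 = 1 - x2 :=
      (polyStrictMono hrc hrd).injOn (by simp; linarith [h1.2])
        (by simp; linarith [h2.2]) e4
    linarith
  have hεab : ε xa ≤ ε xb := hmono ⟨le_refl xa, hab⟩ ⟨hab, le_refl xb⟩ hab
  have hcontε : ContinuousOn ε (Set.Icc xa xb) := fun x hx =>
    ((hεd x (hLpos x hx).ne').continuousAt).continuousWithinAt
  have himage : ε '' Set.Icc xa xb = Set.Icc (ε xa) (ε xb) := by
    apply Set.Subset.antisymm
    · rintro - ⟨x, hx, rfl⟩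
      exact ⟨hmono ⟨le_refl xa, hab⟩ hx hx.1, hmono hx ⟨hab, le_refl xb⟩ hx.2⟩
    · exact intermediate_value_Icc hab hcontε
  -- nonnegativity of E' on the open interval
  have hE'nonneg : ∀ x ∈ Set.Ioo xa xb, 0 ≤ E' x := by
    intro x hx
    have hd := hεd x (hLpos x (Set.Ioo_subset_Icc_self hx)).ne'
    have ht : Filter.Tendsto (slope ε x) (nhdsWithin x (Set.Ioi x)) (nhds (E' x)) :=
      (hasDerivAt_iff_tendsto_slope.mp hd).mono_left
        (nhdsWithin_mono x (fun t ht => Set.mem_compl_singleton_iff.mpr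
          (ne_of_gt ht)))
    refine ge_of_tendsto ht ?_
    filter_upwards [Ioo_mem_nhdsGT_of_mem ⟨le_refl x, hx.2⟩] with t htt
    rw [slope_def_field]
    apply div_nonneg _ (by linarith [htt.1])
    have h1 : ε x ≤ ε t :=
      hmono ⟨hx.1.le, hx.2.le⟩ ⟨hx.1.le.trans htt.1.le, htt.2.le⟩ htt.1.le
    linarith
  -- change of variables
  have step1 : (∫ e in (ε xa)..(ε xb), hBP e) = ∫ x in xa..xb, E' x * nodeDist lam (Y x) := by
    rw [intervalIntegral.integral_of_le hεab, ← MeasureTheory.integral_Icc_eq_integral_Ioc,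
      ← himage,
      integral_image_eq_integral_abs_deriv_smul measurableSet_Icc
        (fun x hx => (hεd x (hLpos x hx).ne').hasDerivWithinAt) hInj hBP,
      MeasureTheory.integral_Icc_eq_integral_Ioo]
    rw [intervalIntegral.integral_of_le hab, ← MeasureTheory.integral_Ioc_eq_integral_Ioo]
    rw [MeasureTheory.integral_Ioc_eq_integral_Ioo,
        MeasureTheory.integral_Ioc_eq_integral_Ioo]
    apply MeasureTheory.setIntegral_congr_fun measurableSet_Ioo
    intro x hx
    have hxm : x ∈ Set.Icc xa xb := Set.Ioo_subset_Icc_self hx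
    simp only [smul_eq_mul]
    rw [hBPdef x hxm, abs_of_nonneg (hE'nonneg x hx)]
  rw [step1]
  -- first integration by parts
  have hcontE' : ContinuousOn E' (Set.uIcc xa xb) := by
    rw [Set.uIcc_of_le hab]
    apply ContinuousOn.div
    · exact (hcontLY.sub (continuous_id.mul
        ((lam.derivative.continuous.comp hcontY).mul hcontR'))).continuousOn
    · exact (hcontLY.pow 2).continuousOn
    · intro x hx
      exact pow_ne_zero 2 (hLpos x hx).ne'
  have hcontN' : Continuous fun x => lam.eval (Y x) * rho.derivative.eval (1 - x) / I :=
    (hcontLY.mul hcontR').div_const I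
  have ibp1 : (∫ x in xa..xb, nodeDist lam (Y x) * E' x) =
      nodeDist lam (Y xb) * ε xb - nodeDist lam (Y xa) * ε xa -
        ∫ x in xa..xb, (lam.eval (Y x) * rho.derivative.eval (1 - x) / I) * ε x := by
    refine intervalIntegral.integral_mul_deriv_eq_deriv_mul
      (fun x hx => hNd x)
      (fun x hx => hεd x (hLpos x (by rwa [Set.uIcc_of_le hab] at hx)).ne')
      (hcontN'.intervalIntegrable xa xb)
      (hcontE'.intervalIntegrable)
  have comm1 : (∫ x in xa..xb, E' x * nodeDist lam (Y x)) =
      ∫ x in xa..xb, nodeDist lam (Y x) * E' x := by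
    apply intervalIntegral.integral_congr; intro x _; exact mul_comm _ _
  rw [comm1, ibp1]
  -- simplify the remaining integrand
  have congr2 : (∫ x in xa..xb, (lam.eval (Y x) * rho.derivative.eval (1 - x) / I) * ε x) =
      ∫ x in xa..xb, (x * rho.derivative.eval (1 - x)) / I := by
    apply intervalIntegral.integral_congr
    intro x hx
    rw [Set.uIcc_of_le hab] at hx
    have hne := (hLpos x hx).ne'
    simp only [hε, epsFun, hY]
    field_simp
    rw [div_eq_iff (show lam.eval (Yfun rho x) ≠ 0 from hne)]; ring
  rw [congr2]
  -- second integration by parts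
  have ibp2 : (∫ x in xa..xb, x * rho.derivative.eval (1 - x)) =
      xb * Y xb - xa * Y xa - ∫ x in xa..xb, 1 * Y x := by
    refine intervalIntegral.integral_mul_deriv_eq_deriv_mul
      (fun x _ => hasDerivAt_id x)
      (fun x _ => hYd x)
      ((continuous_const).intervalIntegrable xa xb)
      (hcontR'.intervalIntegrable xa xb)
  have hdiv : (∫ x in xa..xb, (x * rho.derivative.eval (1 - x)) / I) =
      (∫ x in xa..xb, x * rho.derivative.eval (1 - x)) / I := by
    rw [intervalIntegral.integral_div]
  rw [hdiv, ibp2]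
  have hsimpY : (∫ x in xa..xb, 1 * Y x) = ∫ x in xa..xb, Y x := by
    simp
  rw [hsimpY]
  simp only [nodeDist, hF, hI, hY, hε]
  ring
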